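/- In the feed-forward network with approximate weights (weights in [w₁,w₂] on child-to-parent rep edges, in [0, 1/k^{L+b}] otherwise) and threshold τ = (r₁+r₂)k/2 > 1/k^{b−1}: if B is presented at time t and a neuron u fires at time t + layer(u), then u = rep(c) for some concept c. -/
import Mathlib


open scoped Classical
noncomputable section

/-- A concept hierarchy: concepts at levels `0..L`, each concept at level `≥ 1`
has exactly `k` children one level below, level-0 concepts have no children,
there are exactly `k` top-level concepts, and every non-top concept has a parent. -/
structure ConceptHierarchy (α : Type) [DecidableEq α] where
  L : ℕ
  k : ℕ
  concepts : Finset α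
  level : α → ℕ
  children : α → Finset α
  level_le : ∀ c ∈ concepts, level c ≤ L
  children_mem : ∀ c ∈ concepts, ∀ c' ∈ children c, c' ∈ concepts
  children_level : ∀ c ∈ concepts, ∀ c' ∈ children c, level c' + 1 = level c
  children_card : ∀ c ∈ concepts, 1 ≤ level c → (children c).card = k
  children_leaf : ∀ c ∈ concepts, level c = 0 → children c = ∅
  top_card : (concepts.filter (fun c => level c = L)).card = k
  has_parent : ∀ c ∈ concepts, level c < L → ∃ c' ∈ concepts, c ∈ children c'

namespace ConceptHierarchy

variable {α : Type} [DecidableEq α]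

/-- The parents of a concept. -/
def parents (H : ConceptHierarchy α) (c : α) : Finset α :=
  H.concepts.filter (fun c' => c ∈ H.children c')

/-- Limited overlap: each concept at level `≥ 1` shares at most `o·k` children
with the union of the other concepts at the same level. -/
def LimitedOverlap (H : ConceptHierarchy α) (o : ℝ) : Prop :=
  ∀ c ∈ H.concepts, 1 ≤ H.level c →
    (((H.children c).filter (fun d => ∃ c' ∈ H.concepts, c' ≠ c ∧
        H.level c' = H.level c ∧ d ∈ H.children c')).card : ℝ) ≤ o * H.k

/-- Tree hierarchy: no overlap among child sets of distinct same-level concepts. -/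
def IsTree (H : ConceptHierarchy α) : Prop :=
  ∀ c ∈ H.concepts, ∀ c' ∈ H.concepts, H.level c = H.level c' → c ≠ c' →
    Disjoint (H.children c) (H.children c')

/-- Descendant relation: reflexive-transitive closure of the children relation. -/
inductive Desc (H : ConceptHierarchy α) : α → α → Prop
  | refl (c : α) : Desc H c c
  | step {c d e : α} : d ∈ H.children c → Desc H d e → Desc H c e

/-- The level-0 descendants of a concept. -/
def leaves (H : ConceptHierarchy α) (c : α) : Finset α :=
  H.concepts.filter (fun d => H.Desc c d ∧ H.level d = 0)

/-- Level-indexed bottom-up support sets: `S(0) = B ∩ C₀`,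
`S(ℓ) = {c at level ℓ : |children(c) ∩ S(ℓ-1)| ≥ r·k}`. -/
def suppL (H : ConceptHierarchy α) (r : ℝ) (B : Finset α) : ℕ → Finset α
  | 0 => B ∩ H.concepts.filter (fun c => H.level c = 0)
  | (ℓ+1) => H.concepts.filter (fun c => H.level c = ℓ + 1 ∧
      r * H.k ≤ ((H.children c ∩ suppL H r B ℓ).card : ℝ))

/-- `supp_r(B) = ⋃_ℓ S(ℓ)`. -/
def supp (H : ConceptHierarchy α) (r : ℝ) (B : Finset α) : Set α :=
  ⋃ ℓ, ↑(H.suppL r B ℓ)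

/-- Time-and-level-indexed support sets with feedback strength `f`:
`S(0,t) = B`; `S(ℓ,0) = ∅` for `ℓ ≥ 1`; and
`S(ℓ,t) = S(ℓ,t-1) ∪ {c at level ℓ : |children(c) ∩ S(ℓ-1,t-1)| + f·|parents(c) ∩ S(ℓ+1,t-1)| ≥ r·k}`. -/
def suppFB (H : ConceptHierarchy α) (r f : ℝ) (B : Finset α) : ℕ → ℕ → Finset α
  | 0, _ => B
  | (_+1), 0 => ∅
  | (ℓ+1), (t+1) => suppFB H r f B (ℓ+1) t ∪
      H.concepts.filter (fun c => H.level c = ℓ + 1 ∧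
        r * H.k ≤ ((H.children c ∩ suppFB H r f B ℓ t).card : ℝ) +
          f * ((H.parents c ∩ suppFB H r f B (ℓ+2) t).card : ℝ))
  termination_by ℓ t => t

/-- `supp_{r,f}(B,*,t) = ⋃_ℓ S(ℓ,t)`. -/
def suppFBatTime (H : ConceptHierarchy α) (r f : ℝ) (B : Finset α) (t : ℕ) : Set α :=
  ⋃ ℓ, ↑(H.suppFB r f B ℓ t)

/-- `supp_{r,f}(B) = ⋃_{ℓ,t} S(ℓ,t)`. -/
def suppFBSet (H : ConceptHierarchy α) (r f : ℝ) (B : Finset α) : Set α :=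
  ⋃ t, H.suppFBatTime r f B t

end ConceptHierarchy

/-- Feed-forward 0/1 weights: weight 1 from the rep of a child to the rep of its
parent, weight 0 otherwise. -/
def ffWeight {α ν : Type} [DecidableEq α] (H : ConceptHierarchy α) (rep : α → ν)
    (u v : ν) : ℝ :=
  if ∃ c ∈ H.concepts, ∃ c' ∈ H.children c, u = rep c' ∧ v = rep c then 1 else 0

/-- Feedback-network weights: weight 1 upward (rep of child to rep of parent),
weight `f` downward (rep of parent to rep of child), 0 otherwise. -/
def fbWeight {α ν : Type} [DecidableEq α] (H : ConceptHierarchy α) (rep : α → ν)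
    (f : ℝ) (u v : ν) : ℝ :=
  if ∃ c ∈ H.concepts, ∃ c' ∈ H.children c, u = rep c' ∧ v = rep c then 1
  else if ∃ c ∈ H.concepts, ∃ c' ∈ H.children c, u = rep c ∧ v = rep c' then f
  else 0


lemma level_card_le_aux {α : Type} [DecidableEq α] (H : ConceptHierarchy α) :
    ∀ d : ℕ, d ≤ H.L →
      (H.concepts.filter (fun c => H.level c = H.L - d)).card ≤ H.k ^ (d + 1) := by
  intro d
  induction d with
  | zero =>
    intro _
    simpa using le_of_eq H.top_card
  | succ d ih =>
    intro hd
    have hsub : H.concepts.filter (fun c => H.level c = H.L - (d+1)) ⊆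
        (H.concepts.filter (fun c => H.level c = H.L - d)).biUnion H.children := by
      intro c hc
      simp only [Finset.mem_filter] at hc
      have hlt : H.level c < H.L := by omega
      obtain ⟨c', hc', hmem⟩ := H.has_parent c hc.1 hlt
      refine Finset.mem_biUnion.2 ⟨c', ?_, hmem⟩
      simp only [Finset.mem_filter]
      refine ⟨hc', ?_⟩
      have := H.children_level c' hc' c hmem
      omega
    calc (H.concepts.filter (fun c => H.level c = H.L - (d+1))).card
        ≤ ((H.concepts.filter (fun c => H.level c = H.L - d)).biUnion H.children).card :=
          Finset.card_le_card hsub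
      _ ≤ ∑ c' ∈ H.concepts.filter (fun c => H.level c = H.L - d), (H.children c').card :=
          Finset.card_biUnion_le
      _ ≤ ∑ _c' ∈ H.concepts.filter (fun c => H.level c = H.L - d), H.k := by
          apply Finset.sum_le_sum
          intro c' hc'
          simp only [Finset.mem_filter] at hc'
          exact le_of_eq (H.children_card c' hc'.1 (by omega))
      _ = (H.concepts.filter (fun c => H.level c = H.L - d)).card * H.k := by
          rw [Finset.sum_const, smul_eq_mul]
      _ ≤ H.k ^ (d+1) * H.k := Nat.mul_le_mul_right _ (ih (by omega))
      _ = H.k ^ (d+1+1) := by ring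

lemma level_card_le {α : Type} [DecidableEq α] (H : ConceptHierarchy α) (hk : 1 ≤ H.k)
    (ℓ : ℕ) : (H.concepts.filter (fun c => H.level c = ℓ)).card ≤ H.k ^ (H.L + 1) := by
  by_cases hℓ : ℓ ≤ H.L
  · have h := level_card_le_aux H (H.L - ℓ) (by omega)
    have hrw : H.L - (H.L - ℓ) = ℓ := by omega
    rw [hrw] at h
    exact h.trans (Nat.pow_le_pow_right hk (by omega))
  · have : H.concepts.filter (fun c => H.level c = ℓ) = ∅ := by
      apply Finset.filter_eq_empty_iff.2
      intro c hc hlev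
      exact hℓ (hlev ▸ H.level_le c hc)
    simp [this]

/-- in the feed-forward network with approximate weights
(in `[w₁,w₂]` on child-to-parent rep edges, in `[0, 1/k^(L+b)]` otherwise) and
threshold `τ = (r₁+r₂)k/2 > 1/k^(b-1)`, any neuron firing at time `t + layer(u)`
is the representative of some concept. -/
theorem ff_approx_only_reps_fire {α ν : Type} [DecidableEq α] [DecidableEq ν] [Fintype ν]
    (H : ConceptHierarchy α) (hk : 2 ≤ H.k) (rep : α → ν) (layer : ν → ℕ)
    (hrep_inj : ∀ c ∈ H.concepts, ∀ c' ∈ H.concepts, rep c = rep c' → c = c')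
    (hrep_layer : ∀ c ∈ H.concepts, layer (rep c) = H.level c)
    (r₁ r₂ w₁ w₂ τ : ℝ) (b : ℕ) (hb : 1 ≤ b) (hw0 : 0 ≤ w₁) (hw12 : w₁ ≤ w₂)
    (weight : ν → ν → ℝ)
    (hwedge : ∀ c ∈ H.concepts, ∀ c' ∈ H.children c,
        w₁ ≤ weight (rep c') (rep c) ∧ weight (rep c') (rep c) ≤ w₂)
    (hwother : ∀ u v : ν,
        (¬ ∃ c ∈ H.concepts, ∃ c' ∈ H.children c, u = rep c' ∧ v = rep c) →
        0 ≤ weight u v ∧ weight u v ≤ 1 / (H.k : ℝ) ^ (H.L + b))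
    (hτ : τ = (r₁ + r₂) * H.k / 2) (hτ2 : 1 / (H.k : ℝ) ^ (b - 1) < τ)
    (firing : ν → ℕ → Prop) (B : Finset α)
    (hB : ∀ b' ∈ B, b' ∈ H.concepts ∧ H.level b' = 0) (t : ℕ)
    (hpres : ∀ u : ν, layer u = 0 → (firing u t ↔ ∃ b' ∈ B, u = rep b'))
    (hdyn : ∀ u : ν, 1 ≤ layer u → ∀ s : ℕ, (firing u (s + 1) ↔
        τ ≤ ∑ v ∈ Finset.univ.filter (fun v => layer v + 1 = layer u ∧ firing v s),
          weight v u)) :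
    ∀ u : ν, firing u (t + layer u) → ∃ c ∈ H.concepts, u = rep c := by
  have hk0 : (0:ℝ) < (H.k : ℝ) := by
    have : 0 < H.k := by omega
    exact_mod_cast this
  suffices h : ∀ n, ∀ u : ν, layer u = n → firing u (t + n) → ∃ c ∈ H.concepts, u = rep c by
    intro u hu; exact h (layer u) u rfl hu
  intro n
  induction n with
  | zero =>
    intro u hu hf
    obtain ⟨b', hb', hub⟩ := (hpres u hu).1 (by simpa using hf)
    exact ⟨b', (hB b' hb').1, hub⟩
  | succ n ih =>
    intro u hu hf
    by_contra hnc
    push_neg at hnc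
    have hdy := (hdyn u (by omega) (t + n)).1 (by exact hf)
    set S := Finset.univ.filter (fun v => layer v + 1 = layer u ∧ firing v (t+n)) with hSdef
    have hS : S ⊆ (H.concepts.filter (fun c => H.level c = n)).image rep := by
      intro v hv
      simp only [hSdef, Finset.mem_filter, Finset.mem_univ, true_and] at hv
      obtain ⟨c, hc, hvc⟩ := ih v (by omega) hv.2
      subst hvc
      refine Finset.mem_image.2 ⟨c, Finset.mem_filter.2 ⟨hc, ?_⟩, rfl⟩
      have := hrep_layer c hc
      omega
    have hScard : S.card ≤ H.k ^ (H.L + 1) := by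
      calc S.card ≤ ((H.concepts.filter (fun c => H.level c = n)).image rep).card :=
            Finset.card_le_card hS
        _ ≤ (H.concepts.filter (fun c => H.level c = n)).card := Finset.card_image_le
        _ ≤ H.k ^ (H.L + 1) := level_card_le H (by omega) n
    have hwle : ∀ v ∈ S, weight v u ≤ 1 / (H.k : ℝ) ^ (H.L + b) := by
      intro v hv
      refine (hwother v u ?_).2
      rintro ⟨c, hc, c', hc', -, huc⟩
      exact hnc c hc huc
    have hsum : (∑ v ∈ S, weight v u) ≤ (S.card : ℝ) * (1 / (H.k : ℝ) ^ (H.L + b)) := by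
      have := Finset.sum_le_card_nsmul S (fun v => weight v u) _ hwle
      simpa [nsmul_eq_mul] using this
    have hcast : ((S.card : ℝ)) ≤ (H.k : ℝ) ^ (H.L + 1) := by
      exact_mod_cast hScard
    have hfrac : ((H.k : ℝ) ^ (H.L + 1)) * (1 / (H.k : ℝ) ^ (H.L + b)) =
        1 / (H.k : ℝ) ^ (b - 1) := by
      have hb' : H.L + b = (H.L + 1) + (b - 1) := by omega
      rw [hb', pow_add]
      field_simp
      ring
    have hle : (∑ v ∈ S, weight v u) ≤ 1 / (H.k : ℝ) ^ (b - 1) := by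
      calc (∑ v ∈ S, weight v u) ≤ (S.card : ℝ) * (1 / (H.k : ℝ) ^ (H.L + b)) := hsum
        _ ≤ ((H.k : ℝ) ^ (H.L + 1)) * (1 / (H.k : ℝ) ^ (H.L + b)) := by
            apply mul_le_mul_of_nonneg_right hcast
            positivity
        _ = 1 / (H.k : ℝ) ^ (b - 1) := hfrac
    have : τ ≤ 1 / (H.k : ℝ) ^ (b - 1) := le_trans hdy hle
    linarith
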